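/- Let g₀ ≤ g₁ be natural numbers, let k ≥ 1 and l be natural numbers, let m : Fin k → ℕ with m i ≥ 2 for all i, and let n : Fin l → ℕ with n j ≥ 2 for all j. Set h = 2·((g₀ : ℤ) − g₁). If (l : ℤ) ≥ 2·(k + h), then in ℝ one has 2 − 2g₀ − k + ∑_i 1/(m i) ≠ 2 − 2g₁ − l + ∑_j 1/(n j). -/
import Mathlib


theorem stmt_1 (g₀ g₁ : ℕ) (hg : g₀ ≤ g₁) (k l : ℕ) (hk : 1 ≤ k)
    (m : Fin k → ℕ) (hm : ∀ i, 2 ≤ m i)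
    (n : Fin l → ℕ) (hn : ∀ j, 2 ≤ n j)
    (h : ℤ) (hh : h = 2 * ((g₀ : ℤ) - (g₁ : ℤ)))
    (hl : (l : ℤ) ≥ 2 * ((k : ℤ) + h)) :
    (2 : ℝ) - 2 * g₀ - k + ∑ i, 1 / (m i : ℝ) ≠
      (2 : ℝ) - 2 * g₁ - l + ∑ j, 1 / (n j : ℝ) := by
  subst hh
  have hSn : ∑ j, 1 / (n j : ℝ) ≤ (l : ℝ) * (1 / 2) := by
    calc ∑ j, 1 / (n j : ℝ) ≤ ∑ _j : Fin l, (1 / 2 : ℝ) := by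
          apply Finset.sum_le_sum
          intro j _
          have h2 : (2 : ℝ) ≤ (n j : ℝ) := by exact_mod_cast hn j
          have : (0 : ℝ) < 2 := by norm_num
          exact one_div_le_one_div_of_le this h2
      _ = (l : ℝ) * (1 / 2) := by simp [Finset.sum_const, mul_comm]
  have hSm : 0 < ∑ i, 1 / (m i : ℝ) := by
    apply Finset.sum_pos
    · intro i _
      have h2 : (0 : ℝ) < (m i : ℝ) := by
        have := hm i; positivity
      positivity
    · have : Nonempty (Fin k) := Fin.pos_iff_nonempty.mp hk
      exact Finset.univ_nonempty
  have hl' : (l : ℝ) ≥ 2 * ((k : ℝ) + 2 * ((g₀ : ℝ) - (g₁ : ℝ))) := by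
    exact_mod_cast hl
  intro heq
  nlinarith [hSn, hSm, hl', heq]
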